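/- arXiv:1501.00411 — 2 statements merged into one kernel-verified Lean document; each statement's English description precedes it below -/
import Mathlib

section
/- Let a > 0 be a real constant and let g : ℝ → ℝ be given by an everywhere-convergent power series, g(x) = Σ_{i=0}^{∞} cᵢ xⁱ for all x ∈ ℝ (so that cᵢ = g⁽ⁱ⁾(0)/i! = G(i)). Define f(t) = g(t − a). Then for every k ∈ ℕ the series Σ_{i=k}^{∞} (−1)^{i−k} · C(i,k) · a^{i−k} · G(i) converges and equals the differential transformation F(k) of f at 0, i.e. f⁽ᵏ⁾(0)/k! = Σ_{i=k}^{∞} (−1)^{i−k} · C(i,k) · a^{i−k} · cᵢ, where C(i,k) denotes the binomial coefficient. -/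
open FormalMultilinearSeries

lemma aux_radius_top (d : ℕ → ℝ) (h : ∀ x : ℝ, Summable (fun i => d i * x ^ i)) :
    (ofScalars ℝ d).radius = ⊤ := by
  refine le_antisymm le_top (ENNReal.le_of_forall_nnreal_lt fun r _ => ?_)
  apply (ofScalars ℝ d).le_radius_of_isBigO
  have := (((h r).tendsto_atTop_zero).isBigO_one ℝ).abs_left
  refine this.congr (fun n => ?_) (fun _ => rfl)
  rw [ofScalars_norm, Real.norm_eq_abs, abs_mul, abs_pow, abs_of_nonneg r.coe_nonneg]

lemma aux_hps (d : ℕ → ℝ) (h : ℝ → ℝ) (hd : ∀ x : ℝ, HasSum (fun i => d i * x ^ i) (h x)) :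
    HasFPowerSeriesOnBall h (ofScalars ℝ d) 0 ⊤ := by
  refine ⟨by rw [aux_radius_top d fun x => (hd x).summable], ENNReal.zero_lt_top, fun {y} _ => ?_⟩
  rw [zero_add]
  simpa only [ofScalars_apply_eq, smul_eq_mul] using hd y

lemma aux_deriv (d : ℕ → ℝ) (h : ℝ → ℝ) (hd : ∀ x : ℝ, HasSum (fun i => d i * x ^ i) (h x))
    (x : ℝ) :
    HasSum (fun j : ℕ => ((j : ℝ) + 1) * d (j + 1) * x ^ j) (deriv h x) := by
  set p := ofScalars ℝ d with hp
  have H := (aux_hps d h hd).fderiv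
  have H2 := H.hasSum (y := x) (by simp)
  have H3 := (ContinuousLinearMap.apply ℝ ℝ (1 : ℝ)).hasSum H2
  have key : ∀ n : ℕ, (p.derivSeries n fun _ => x) 1 = ((n : ℝ) + 1) * d (n + 1) * x ^ n := by
    intro n
    have diag : ∀ y : ℝ,
        (p.derivSeries n fun _ => y) y = ((n : ℝ) + 1) * (d (n + 1) * y ^ (n + 1)) := by
      intro y
      rw [p.derivSeries_apply_diag n y, ofScalars_apply_eq]
      push_cast
      simp only [nsmul_eq_mul, smul_eq_mul]
      push_cast
      ring
    have hom : ∀ z : ℝ,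
        (p.derivSeries n fun _ => x) z = x ^ n * (p.derivSeries n fun _ => (1:ℝ)) z := by
      intro z
      have := (p.derivSeries n).map_smul_univ (fun _ : Fin n => x) (fun _ : Fin n => (1:ℝ))
      simp only [smul_eq_mul, mul_one, Finset.prod_const, Finset.card_univ,
        Fintype.card_fin] at this
      rw [this]
      simp [smul_eq_mul]
    have h1 : (p.derivSeries n fun _ => (1:ℝ)) 1 = ((n : ℝ) + 1) * d (n + 1) := by
      have := diag 1; simpa using this
    rw [hom 1, h1]; ring
  have H4 : HasSum (fun n => (p.derivSeries n fun _ => x) 1) (fderiv ℝ h x 1) := by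
    simpa [hp] using H3
  rw [show (fun j : ℕ => ((j : ℝ) + 1) * d (j + 1) * x ^ j)
      = fun n => (p.derivSeries n fun _ => x) 1 from funext fun n => (key n).symm]
  rwa [fderiv_apply_one_eq_deriv] at H4

lemma aux_main (c : ℕ → ℝ) (g : ℝ → ℝ)
    (hg : ∀ x : ℝ, HasSum (fun i : ℕ => c i * x ^ i) (g x)) :
    ∀ (k : ℕ) (x : ℝ),
      HasSum (fun j : ℕ => ((k + j).choose k : ℝ) * c (k + j) * x ^ j)
        (iteratedDeriv k g x / (k.factorial : ℝ)) := by
  intro k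
  induction k with
  | zero => intro x; simpa using hg x
  | succ k ih =>
    intro x
    have hstep := aux_deriv (fun j => ((k + j).choose k : ℝ) * c (k + j))
      (fun x => iteratedDeriv k g x / (k.factorial : ℝ)) ih x
    have hder : deriv (fun x => iteratedDeriv k g x / (k.factorial : ℝ)) x
        = iteratedDeriv (k + 1) g x / (k.factorial : ℝ) := by
      rw [deriv_div_const, ← iteratedDeriv_succ]
    rw [hder] at hstep
    have h2 := hstep.div_const ((k : ℝ) + 1)
    have hval : iteratedDeriv (k + 1) g x / (k.factorial : ℝ) / ((k : ℝ) + 1)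
        = iteratedDeriv (k + 1) g x / ((k + 1).factorial : ℝ) := by
      rw [Nat.factorial_succ, div_div]
      congr 1
      push_cast
      ring
    rw [hval] at h2
    have h1 : ((k : ℝ) + 1) ≠ 0 := by positivity
    convert h2 using 2 with j
    · rfl
    have hj : k + 1 + j = k + (j + 1) := by omega
    rw [hj]
    have hnat : (k + j + 1).choose (k + 1) * (k + 1) = (k + j + 1).choose k * (j + 1) := by
      rw [Nat.choose_succ_right_eq]
      congr 1
      omega
    have hr : ((k + j + 1).choose (k + 1) : ℝ) * ((k : ℝ) + 1)
        = ((k + j + 1).choose k : ℝ) * ((j : ℝ) + 1) := by exact_mod_cast hnat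
    simp only [← add_assoc] at hr ⊢
    field_simp
    linear_combination c (k + j + 1) * x ^ j * hr


/-- Differential transformation of a shifted function: if `g(x) = Σ_{i=0}^∞ cᵢ xⁱ`
for all `x ∈ ℝ` and `f(t) = g(t−a)` with `a > 0`, then for every `k` the series
`Σ_{i=k}^∞ (−1)^{i−k} C(i,k) a^{i−k} cᵢ` (written with index `i = k + j`) converges
and its sum is `F(k) = f⁽ᵏ⁾(0)/k!`. -/
theorem stmt_3 (a : ℝ) (ha : 0 < a) (c : ℕ → ℝ) (g : ℝ → ℝ)
    (hg : ∀ x : ℝ, HasSum (fun i : ℕ => c i * x ^ i) (g x)) (k : ℕ) :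
    HasSum
      (fun j : ℕ => (-1 : ℝ) ^ j * (Nat.choose (k + j) k : ℝ) * a ^ j * c (k + j))
      (iteratedDeriv k (fun t => g (t - a)) 0 / (Nat.factorial k : ℝ)) := by
  have hshift : iteratedDeriv k (fun t => g (t - a)) 0 = iteratedDeriv k g (-a) := by
    have := iteratedDeriv_comp_add_const k g (-a)
    simp only [← sub_eq_add_neg] at this
    rw [this]
    norm_num
  rw [hshift]
  have h := aux_main c g hg k (-a)
  convert h using 2 with j
  rw [neg_pow a j]
  ring
end

section
/- Let a > 0 be a real constant, let n ∈ ℕ, and let g : ℝ → ℝ be given by an everywhere-convergent power series, g(x) = Σ_{i=0}^{∞} cᵢ xⁱ for all x ∈ ℝ (so that cᵢ = g⁽ⁱ⁾(0)/i! = G(i)). Define f(t) = (dⁿ/dtⁿ) g(t − a), the n-th derivative of the shifted function t ↦ g(t−a). Then for every k ∈ ℕ the series Σ_{i=k+n}^{∞} (−1)^{i−k−n} · C(i,k+n) · a^{i−k−n} · G(i) converges and the differential transformation of f at 0 satisfies F(k) = ((k+n)!/k!) · Σ_{i=k+n}^{∞} (−1)^{i−k−n} · C(i,k+n) · a^{i−k−n}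 · cᵢ, where C(i,j) denotes the binomial coefficient. -/
open Filter Finset NNReal

lemma aux_abs_summable {c : ℕ → ℝ} (h : ∀ x : ℝ, Summable fun i => c i * x ^ i)
    (r : ℝ≥0) : Summable fun i => |c i| * (r : ℝ) ^ i := by
  set p := FormalMultilinearSeries.ofScalars ℝ c with hp
  have hnorm : ∀ n, ‖p n‖ = |c n| := fun n => by
    rw [hp, FormalMultilinearSeries.ofScalars_norm, Real.norm_eq_abs]
  have hrad : p.radius = ⊤ := by
    apply ENNReal.eq_top_of_forall_nnreal_le
    intro s
    apply p.le_radius_of_tendsto (l := 0)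
    have h0 := (h (s : ℝ)).tendsto_atTop_zero
    have h1 := h0.abs
    simp only [abs_mul, abs_pow, abs_of_nonneg s.coe_nonneg, abs_zero] at h1
    simpa only [hnorm] using h1
  have h2 := p.summable_norm_mul_pow (r := r) (by rw [hrad]; exact ENNReal.coe_lt_top)
  simpa only [hnorm] using h2

lemma aux_key {a : ℝ} (ha : 0 < a) {c : ℕ → ℝ} {g : ℝ → ℝ}
    (hg : ∀ x : ℝ, HasSum (fun i : ℕ => c i * x ^ i) (g x)) (y : ℝ) :
    HasSum (fun q : ℕ × ℕ =>
      c (q.1 + q.2) * ((q.1 + q.2).choose q.1 : ℝ) * (-a) ^ q.2 * y ^ q.1) (g (y - a)) := by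
  set F : ℕ × ℕ → ℝ := fun q =>
    c (q.1 + q.2) * ((q.1 + q.2).choose q.1 : ℝ) * (-a) ^ q.2 * y ^ q.1 with hF
  set G : ℕ × ℕ → ℝ := fun q =>
    |c (q.1 + q.2)| * ((q.1 + q.2).choose q.1 : ℝ) * a ^ q.2 * |y| ^ q.1 with hG
  have hG0 : ∀ q, 0 ≤ G q := fun q => by
    apply mul_nonneg (mul_nonneg (mul_nonneg (abs_nonneg _) (Nat.cast_nonneg _))
      (pow_nonneg ha.le _)) (pow_nonneg (abs_nonneg _) _)
  have hFG : ∀ q, ‖F q‖ ≤ G q := by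
    intro q
    rw [hF, hG]
    simp only [Real.norm_eq_abs, abs_mul, abs_pow, abs_neg, abs_of_pos ha, Nat.abs_cast, le_refl]
  have hGfiber : ∀ i : ℕ, ∑ q ∈ antidiagonal i, G q = |c i| * (|y| + a) ^ i := by
    intro i
    rw [Finset.Nat.sum_antidiagonal_eq_sum_range_succ_mk, add_pow, Finset.mul_sum]
    refine Finset.sum_congr rfl fun m hm => ?_
    rw [Finset.mem_range, Nat.lt_succ_iff] at hm
    rw [hG]
    simp only [Nat.add_sub_cancel' hm]
    ring
  have hFfiber : ∀ i : ℕ, ∑ q ∈ antidiagonal i, F q = c i * (y - a) ^ i := by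
    intro i
    rw [Finset.Nat.sum_antidiagonal_eq_sum_range_succ_mk]
    have : y - a = y + (-a) := by ring
    rw [this, add_pow, Finset.mul_sum]
    refine Finset.sum_congr rfl fun m hm => ?_
    rw [Finset.mem_range, Nat.lt_succ_iff] at hm
    rw [hF]
    simp only [Nat.add_sub_cancel' hm]
    ring
  have hGsum : Summable G := by
    rw [← Finset.HasAntidiagonal.sigmaAntidiagonalEquivProd.summable_iff]
    rw [summable_sigma_of_nonneg (f := G ∘ ⇑Finset.HasAntidiagonal.sigmaAntidiagonalEquivProd) (fun x => hG0 _)]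
    constructor
    · intro i; exact (hasSum_fintype _).summable
    · have he : ∀ i : ℕ, ∑' x : (antidiagonal i : Finset (ℕ × ℕ)),
          (G ∘ Finset.HasAntidiagonal.sigmaAntidiagonalEquivProd) ⟨i, x⟩ = |c i| * (|y| + a) ^ i := by
        intro i
        have : ∀ x : (antidiagonal i : Finset (ℕ × ℕ)),
            (G ∘ Finset.HasAntidiagonal.sigmaAntidiagonalEquivProd) ⟨i, x⟩ = G x := fun x => rfl
        rw [tsum_congr this, Finset.tsum_subtype]
        exact hGfiber i
      simp only [he]
      have := aux_abs_summable (fun x => (hg x).summable) ⟨|y| + a, by positivity⟩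
      exact this
  have hFsum : Summable F := Summable.of_norm_bounded hGsum hFG
  obtain ⟨T, hT⟩ := hFsum
  have hsig : HasSum (F ∘ Finset.HasAntidiagonal.sigmaAntidiagonalEquivProd) T :=
    (Finset.HasAntidiagonal.sigmaAntidiagonalEquivProd.hasSum_iff).mpr hT
  have hfib : ∀ i : ℕ, HasSum
      (fun x : (antidiagonal i : Finset (ℕ × ℕ)) =>
        (F ∘ Finset.HasAntidiagonal.sigmaAntidiagonalEquivProd) ⟨i, x⟩) (c i * (y - a) ^ i) := by
    intro i
    have h1 := (antidiagonal i).hasSum F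
    rw [hFfiber i] at h1
    exact h1
  have hrow : HasSum (fun i : ℕ => c i * (y - a) ^ i) T := hsig.sigma hfib
  have : T = g (y - a) := hrow.unique (hg (y - a))
  exact this ▸ hT

/-- Differential transformation of the n-th derivative of a shifted function:
if `g(x) = Σ_{i=0}^∞ cᵢ xⁱ` for all `x ∈ ℝ` and `f(t) = (dⁿ/dtⁿ) g(t−a)` with `a > 0`,
then for every `k` the series `Σ_{i=k+n}^∞ (−1)^{i−k−n} C(i,k+n) a^{i−k−n} cᵢ`
(written with index `i = (k+n) + j`) converges, with sum `S`, and
`F(k) = f⁽ᵏ⁾(0)/k! = ((k+n)!/k!) · S`. -/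
theorem stmt_4 (a : ℝ) (ha : 0 < a) (n : ℕ) (c : ℕ → ℝ) (g : ℝ → ℝ)
    (hg : ∀ x : ℝ, HasSum (fun i : ℕ => c i * x ^ i) (g x)) (k : ℕ) :
    ∃ S : ℝ,
      HasSum
        (fun j : ℕ =>
          (-1 : ℝ) ^ j * (Nat.choose (k + n + j) (k + n) : ℝ) * a ^ j * c (k + n + j)) S ∧
      iteratedDeriv k (fun t => iteratedDeriv n (fun s => g (s - a)) t) 0 /
          (Nat.factorial k : ℝ) =
        ((Nat.factorial (k + n) : ℝ) / (Nat.factorial k : ℝ)) * S := by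
  -- rows: coefficient series
  have hbrow : ∀ m : ℕ, Summable (fun j => c (m + j) * ((m + j).choose m : ℝ) * (-a) ^ j) := by
    intro m
    have h1 := (aux_key ha hg 1).summable.prod_factor m
    simpa using h1
  set b : ℕ → ℝ := fun m => ∑' j, c (m + j) * ((m + j).choose m : ℝ) * (-a) ^ j with hb
  have hbHas : ∀ m, HasSum (fun j => c (m + j) * ((m + j).choose m : ℝ) * (-a) ^ j) (b m) :=
    fun m => (hbrow m).hasSum
  have hser : ∀ y : ℝ, HasSum (fun m => b m * y ^ m) (g (y - a)) := by
    intro y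
    apply (aux_key ha hg y).prod_fiberwise
    intro m
    exact (hbHas m).mul_right _
  -- power series for g centered at -a
  set q := FormalMultilinearSeries.ofScalars ℝ b with hq
  have hqnorm : ∀ m, ‖q m‖ = |b m| := fun m => by
    rw [hq, FormalMultilinearSeries.ofScalars_norm, Real.norm_eq_abs]
  have hqrad : q.radius = ⊤ := by
    apply ENNReal.eq_top_of_forall_nnreal_le
    intro s
    apply q.le_radius_of_tendsto (l := 0)
    have h0 := (hser (s : ℝ)).summable.tendsto_atTop_zero
    have h1 := h0.abs
    simp only [abs_mul, abs_pow, abs_of_nonneg s.coe_nonneg, abs_zero] at h1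
    simpa only [hqnorm] using h1
  have hg2 : HasFPowerSeriesOnBall g q (-a) ⊤ := by
    refine ⟨by rw [hqrad], by simp, ?_⟩
    intro y _
    simp only [hq, FormalMultilinearSeries.ofScalars_apply_eq, smul_eq_mul]
    rw [neg_add_eq_sub]
    exact hser y
  have hder : ∀ m : ℕ, iteratedDeriv m g (-a) = (m.factorial : ℝ) * b m := by
    intro m
    have h1 := hg2.factorial_smul (y := (1 : ℝ)) m
    rw [iteratedFDeriv_apply_eq_iteratedDeriv_mul_prod] at h1
    simp only [hq, FormalMultilinearSeries.ofScalars_apply_eq, smul_eq_mul, one_pow, mul_one,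
      Finset.prod_const_one, one_smul, nsmul_eq_mul] at h1
    rw [one_mul] at h1
    exact h1.symm
  -- reduce the LHS to iteratedDeriv (k+n) g (-a)
  have hL : iteratedDeriv k (fun t => iteratedDeriv n (fun s => g (s - a)) t) 0
      = iteratedDeriv (k + n) g (-a) := by
    have e1 : (fun s : ℝ => g (s - a)) = fun s => g (s + (-a)) := by
      funext s; rw [sub_eq_add_neg]
    have e2 : (fun t : ℝ => iteratedDeriv n (fun s => g (s - a)) t)
        = fun t => (iteratedDeriv n g) (t + (-a)) := by
      funext t
      rw [e1, iteratedDeriv_comp_add_const]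
    rw [e2, iteratedDeriv_comp_add_const]
    have e3 : iteratedDeriv k (iteratedDeriv n g) = iteratedDeriv (k + n) g := by
      rw [iteratedDeriv_eq_iterate, iteratedDeriv_eq_iterate, iteratedDeriv_eq_iterate,
        ← Function.iterate_add_apply]
    rw [e3]
    show iteratedDeriv (k + n) g (0 + -a) = _
    rw [zero_add]
  refine ⟨b (k + n), ?_, ?_⟩
  · have ef : (fun j => (-1 : ℝ) ^ j * ((k + n + j).choose (k + n) : ℝ) * a ^ j * c (k + n + j))
        = fun j => c ((k + n) + j) * (((k + n) + j).choose (k + n) : ℝ) * (-a) ^ j := by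
      funext j; rw [neg_pow]; ring
    rw [ef]
    exact hbHas (k + n)
  · rw [hL, hder (k + n)]
    have hk : (k.factorial : ℝ) ≠ 0 := Nat.cast_ne_zero.mpr k.factorial_ne_zero
    field_simp
end
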